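/- Let κ₁, κ₂ > −1/2 and κ₃ > −1. Let G and G' be polynomials in two variables that are even in the second variable and satisfy ∫_{B²} G(s,t) G'(s,t) W_B^κ(s,t) ds dt = 0, where B² is the closed unit disk. Then the functions G∘ψ and G'∘ψ on Λ_{a,b,c} coincide with polynomials that are even in the second variable and of the same degrees (explicitly, if G(s,t) = H(s,t²), then (G∘ψ)(u,v) = H(u, (−a+(a−c)u²+v²)/(b−a))), and ∫_{Λ_{a,b,c}} (G∘ψ)(u,v) (G'∘ψ)(u,v) W^κ_{a,b,c}(u,v) du dv = 0. -/

import Mathlib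

open MeasureTheory

noncomputable section

/-- The upper half `Λ_{a,b,c}` of the fully symmetric domain `Ω_{a,b,c}`. -/
def LamSet (a b c : ℝ) : Set (ℝ × ℝ) :=
  {p | a + (c - a) * p.1 ^ 2 ≤ p.2 ^ 2 ∧ p.2 ^ 2 ≤ b + (c - b) * p.1 ^ 2 ∧
       |p.1| ≤ 1 ∧ 0 ≤ p.2}

/-- The closed unit disk `B²`. -/
def Disk : Set (ℝ × ℝ) := {p | p.1 ^ 2 + p.2 ^ 2 ≤ 1}

/-- The function `𝔱(u,v) = sqrt((−a+(a−c)u²+v²)/(b−a))`. -/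
def frakt (a b c : ℝ) (p : ℝ × ℝ) : ℝ :=
  Real.sqrt ((-a + (a - c) * p.1 ^ 2 + p.2 ^ 2) / (b - a))

/-- The map `ψ(u,v) = (u, 𝔱(u,v))`. -/
def psiMap (a b c : ℝ) (p : ℝ × ℝ) : ℝ × ℝ := (p.1, frakt a b c p)

/-- The weight `W^κ_{a,b,c}` on `Λ_{a,b,c}`. -/
def Wabc (a b c κ1 κ2 κ3 : ℝ) (p : ℝ × ℝ) : ℝ :=
  |p.2| * |p.1| ^ (2 * κ1) *
    ((-a + (a - c) * p.1 ^ 2 + p.2 ^ 2) / (b - a)) ^ (κ2 - 1 / 2) *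
    ((b - (b - c) * p.1 ^ 2 - p.2 ^ 2) / (b - a)) ^ κ3

/-- The weight `W_B^κ(s,t) = |s|^{2κ₁} |t|^{2κ₂} (1−s²−t²)^{κ₃}` on the disk. -/
def WBdisk (κ1 κ2 κ3 : ℝ) (p : ℝ × ℝ) : ℝ :=
  |p.1| ^ (2 * κ1) * |p.2| ^ (2 * κ2) * (1 - p.1 ^ 2 - p.2 ^ 2) ^ κ3

/-- Evaluation of a polynomial in two variables at a point of `ℝ²`. -/
def ev2 (P : MvPolynomial (Fin 2) ℝ) (p : ℝ × ℝ) : ℝ :=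
  MvPolynomial.eval ![p.1, p.2] P

/-- A polynomial of two variables is even in the second variable. -/
def EvenSnd (P : MvPolynomial (Fin 2) ℝ) : Prop :=
  ∀ u v : ℝ, ev2 P (u, -v) = ev2 P (u, v)


section AuxPoly
open MvPolynomial



abbrev MvP := MvPolynomial (Fin 2) ℝ

def fin2 (i j : ℕ) : Fin 2 →₀ ℕ := Finsupp.single 0 i + Finsupp.single 1 j

@[simp] lemma fin2_apply0 (i j : ℕ) : fin2 i j 0 = i := by
  simp [fin2, Finsupp.single_apply]

@[simp] lemma fin2_apply1 (i j : ℕ) : fin2 i j 1 = j := by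
  simp [fin2, Finsupp.single_apply]

lemma fin2_self (m : Fin 2 →₀ ℕ) : fin2 (m 0) (m 1) = m := by
  ext i
  fin_cases i <;> simp

lemma fin2_inj {i j i' j' : ℕ} (h : fin2 i j = fin2 i' j') : i = i' ∧ j = j' := by
  constructor
  · have := DFunLike.congr_fun h 0; simpa using this
  · have := DFunLike.congr_fun h 1; simpa using this

lemma fin2_degree (i j : ℕ) : (fin2 i j).sum (fun _ e => e) = i + j := by
  classical
  rw [fin2, Finsupp.sum_add_index (by simp) (by simp)]
  simp [Finsupp.sum_single_index]

lemma monomial_fin2 (i j : ℕ) (c : ℝ) :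
    (monomial (fin2 i j) c : MvP) = C c * X 0 ^ i * X 1 ^ j := by
  rw [X_pow_eq_monomial, X_pow_eq_monomial, C_apply, monomial_mul, monomial_mul]
  simp [fin2, mul_comm]

lemma prod_support_two (f : Fin 2 → MvP) (d : Fin 2 →₀ ℕ) :
    (∏ i ∈ d.support, f i ^ d i) = f 0 ^ d 0 * f 1 ^ d 1 := by
  rw [← Fin.prod_univ_two (fun i => f i ^ d i)]
  apply Finset.prod_subset (Finset.subset_univ _)
  intro i _ hi
  have : d i = 0 := by simpa using hi
  simp [this]

lemma bind_expand (f : Fin 2 → MvP) (K : MvP) :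
    bind₁ f K = ∑ m ∈ K.support, C (coeff m K) * f 0 ^ m 0 * f 1 ^ m 1 := by
  conv_lhs => rw [K.as_sum]
  rw [map_sum]
  refine Finset.sum_congr rfl fun m _ => ?_
  rw [bind₁_monomial, prod_support_two, mul_assoc]

/-- weighted degree with weights (1,2) -/
def wd (K : MvP) : ℕ := K.support.sup fun m => m 0 + 2 * m 1

lemma aeval_eq_eval' (x : Fin 2 → ℝ) (q : MvP) : aeval x q = eval x q := by
  rw [← coe_aeval_eq_eval]; rfl

lemma eval_bind₁' (x : Fin 2 → ℝ) (g : Fin 2 → MvP) (p : MvP) :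
    eval x (bind₁ g p) = eval (fun i => eval x (g i)) p := by
  have := aeval_bind₁ (S := ℝ) (R := ℝ) x g p
  simpa only [aeval_eq_eval'] using this

lemma wd_def (K : MvP) : wd K = K.support.sup (fun m => m 0 + 2 * m 1) := rfl

lemma monomial_eq_two (m : Fin 2 →₀ ℕ) (c : ℝ) :
    (monomial m c : MvP) = C c * X 0 ^ (m 0) * X 1 ^ (m 1) := by
  conv_lhs => rw [← fin2_self m]
  rw [monomial_fin2]

def vA : Fin 2 → MvP := ![X 0, X 1 ^ 2]

@[simp] lemma vA_zero : vA 0 = X 0 := rfl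
@[simp] lemma vA_one : vA 1 = X 1 ^ 2 := rfl

lemma bindA_eq_sum (K : MvP) :
    bind₁ vA K = ∑ m ∈ K.support, monomial (fin2 (m 0) (2 * m 1)) (coeff m K) := by
  rw [bind_expand]
  refine Finset.sum_congr rfl fun m _ => ?_
  rw [monomial_fin2, pow_mul]
  simp

lemma coeff_bindA (K : MvP) (m : Fin 2 →₀ ℕ) (hm : m ∈ K.support) :
    coeff (fin2 (m 0) (2 * m 1)) (bind₁ vA K) = coeff m K := by
  rw [bindA_eq_sum, coeff_sum, Finset.sum_eq_single_of_mem m hm]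
  · simp [coeff_monomial]
  · intro m' hm' hne
    rw [coeff_monomial, if_neg]
    intro h
    obtain ⟨h0, h1⟩ := fin2_inj h
    have h1' : m' 1 = m 1 := by omega
    exact hne (by rw [← fin2_self m', ← fin2_self m, h0, h1'])

lemma totalDegree_bindA (K : MvP) : (bind₁ vA K).totalDegree = wd K := by
  apply le_antisymm
  · rw [bindA_eq_sum]
    refine (totalDegree_finset_sum _ _).trans (Finset.sup_le fun m hm => ?_)
    refine (totalDegree_monomial_le _ _).trans ?_
    have he : ((fin2 (m 0) (2 * m 1)).sum fun (_ : Fin 2) => (id : ℕ → ℕ)) = m 0 + 2 * m 1 :=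
      fin2_degree _ _
    rw [he, wd_def]
    exact Finset.le_sup (f := fun m : Fin 2 →₀ ℕ => m 0 + 2 * m 1) hm
  · by_cases hK : K = 0
    · simp [hK, wd_def]
    · obtain ⟨m, hm, hmax⟩ := Finset.exists_mem_eq_sup K.support
        (support_nonempty.2 hK) (fun m : Fin 2 →₀ ℕ => m 0 + 2 * m 1)
      rw [wd_def, hmax]
      have hc : coeff (fin2 (m 0) (2 * m 1)) (bind₁ vA K) ≠ 0 := by
        rw [coeff_bindA K m hm]; exact mem_support_iff.mp hm
      have h2 := le_totalDegree (mem_support_iff.mpr hc)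
      rwa [fin2_degree] at h2

lemma totalDegree_bind_le (f : Fin 2 → MvP) (h0 : (f 0).totalDegree ≤ 1)
    (h1 : (f 1).totalDegree ≤ 2) (K : MvP) :
    (bind₁ f K).totalDegree ≤ wd K := by
  rw [bind_expand]
  refine (totalDegree_finset_sum _ _).trans (Finset.sup_le fun m hm => ?_)
  calc (C (coeff m K) * f 0 ^ m 0 * f 1 ^ m 1).totalDegree
      ≤ (C (coeff m K) * f 0 ^ m 0).totalDegree + (f 1 ^ m 1).totalDegree :=
        totalDegree_mul _ _
    _ ≤ ((C (coeff m K) : MvP).totalDegree + (f 0 ^ m 0).totalDegree)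
          + (f 1 ^ m 1).totalDegree := Nat.add_le_add_right (totalDegree_mul _ _) _
    _ ≤ (0 + m 0 * 1) + m 1 * 2 := by
        refine add_le_add (add_le_add ?_ ?_) ?_
        · simp
        · exact (totalDegree_pow _ _).trans (Nat.mul_le_mul_left _ h0)
        · exact (totalDegree_pow _ _).trans (Nat.mul_le_mul_left _ h1)
    _ = m 0 + 2 * m 1 := by omega
    _ ≤ wd K := by
        rw [wd_def]; exact Finset.le_sup (f := fun m : Fin 2 →₀ ℕ => m 0 + 2 * m 1) hm

def vN : Fin 2 → MvP := ![X 0, -X 1]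

lemma even_support {G : MvP} (hG : ∀ u v : ℝ, eval ![u, -v] G = eval ![u, v] G) :
    ∀ m ∈ G.support, Even (m 1) := by
  have hNG : bind₁ vN G = G := by
    apply MvPolynomial.funext
    intro x
    rw [eval_bind₁']
    have hx : (fun i => eval x (vN i)) = ![x 0, -(x 1)] := by
      funext i; fin_cases i <;> simp [vN]
    rw [hx]
    have hx2 : x = ![x 0, x 1] := by funext i; fin_cases i <;> rfl
    conv_rhs => rw [hx2]
    exact hG (x 0) (x 1)
  have hsum : bind₁ vN G
      = ∑ m ∈ G.support, monomial m ((-1) ^ (m 1) * coeff m G) := by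
    rw [bind_expand]
    refine Finset.sum_congr rfl fun m _ => ?_
    have h1 : ((vN 1 : MvP)) ^ (m 1) = C ((-1 : ℝ) ^ (m 1)) * X 1 ^ m 1 := by
      show ((-X 1 : MvP)) ^ (m 1) = _
      rw [neg_pow]
      simp [map_pow]
    have h0 : (vN 0 : MvP) = X 0 := rfl
    rw [h0, h1, monomial_eq_two, C_mul]
    ring
  intro m hm
  by_contra hodd
  rw [Nat.not_even_iff_odd] at hodd
  have hcm := congrArg (coeff m) hNG
  rw [hsum, coeff_sum, Finset.sum_eq_single_of_mem m hm
    (fun m' _ hne => by rw [coeff_monomial, if_neg (fun h => hne h)]),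
    coeff_monomial, if_pos rfl, Odd.neg_one_pow hodd] at hcm
  have hz : coeff m G = 0 := by linarith
  exact mem_support_iff.mp hm hz

def quad (α β γ : ℝ) : MvP := C α * X 0 ^ 2 + C β * X 1 ^ 2 + C γ
def quad1 (α β γ : ℝ) : MvP := C α * X 0 ^ 2 + C β * X 1 + C γ

lemma eval_quad (α β γ : ℝ) (x : Fin 2 → ℝ) :
    eval x (quad α β γ) = α * x 0 ^ 2 + β * x 1 ^ 2 + γ := by simp [quad]

lemma deg_quad (α β γ : ℝ) : (quad α β γ).totalDegree ≤ 2 := by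
  refine (totalDegree_add _ _).trans (max_le ((totalDegree_add _ _).trans (max_le ?_ ?_)) ?_)
  · exact (totalDegree_mul _ _).trans (by simp [totalDegree_X_pow])
  · exact (totalDegree_mul _ _).trans (by simp [totalDegree_X_pow])
  · simp

def hhalf (G : MvP) : MvP := ∑ m ∈ G.support, monomial (fin2 (m 0) (m 1 / 2)) (coeff m G)

lemma bind₁_monomial_fin2 (f : Fin 2 → MvP) (i j : ℕ) (c : ℝ) :
    bind₁ f (monomial (fin2 i j) c) = C c * f 0 ^ i * f 1 ^ j := by
  rw [bind₁_monomial, prod_support_two]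
  simp [mul_assoc]

lemma bindA_hhalf (G : MvP) (hG : ∀ u v : ℝ, eval ![u, -v] G = eval ![u, v] G) :
    bind₁ vA (hhalf G) = G := by
  have hEv := even_support hG
  rw [hhalf, map_sum]
  conv_rhs => rw [G.as_sum]
  refine Finset.sum_congr rfl fun m hm => ?_
  rw [bind₁_monomial_fin2, vA_zero, vA_one, ← pow_mul,
    Nat.two_mul_div_two_of_even (hEv m hm), monomial_eq_two]

lemma exists_transfer (a b c : ℝ) (hab : a < b) (G : MvP)
    (hG : ∀ u v : ℝ, eval ![u, -v] G = eval ![u, v] G) :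
    ∃ Q : MvP, Q.totalDegree = G.totalDegree ∧
      (∀ u v : ℝ, eval ![u, v] Q
         = eval ![u, (-a + (a - c) * u ^ 2 + v ^ 2) / (b - a)] (hhalf G)) ∧
      (∀ u t : ℝ, eval ![u, t] G = eval ![u, t ^ 2] (hhalf G)) := by
  have hba : b - a ≠ 0 := sub_ne_zero.mpr hab.ne'
  set H := hhalf G with hH
  have hA : bind₁ vA H = G := bindA_hhalf G hG
  set p1 := (a - c) * (b - a)⁻¹ with hp1
  set p2 := (b - a)⁻¹ with hp2
  set p3 := (-a) * (b - a)⁻¹ with hp3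
  set Zp := quad p1 p2 p3 with hZp
  set Z'p := quad (c - a) (b - a) a with hZ'p
  set S : Fin 2 → MvP := ![X 0, quad1 p1 p2 p3] with hS
  set Q := bind₁ (![X 0, Zp] : Fin 2 → MvP) H with hQ
  have hQeq : Q = bind₁ vA (bind₁ S H) := by
    rw [hQ, bind₁_bind₁]
    have hfun : (fun i => bind₁ vA (S i)) = (![X 0, Zp] : Fin 2 → MvP) := by
      funext i
      fin_cases i
      · simp [hS, vA]
      · show bind₁ vA (quad1 p1 p2 p3) = Zp
        simp [quad1, hZp, quad, map_add, map_mul, bind₁_C_right, bind₁_X_right]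
    rw [hfun]
  have hGeq : G = bind₁ (![X 0, Z'p] : Fin 2 → MvP) (bind₁ S H) := by
    rw [← hA, bind₁_bind₁]
    have hfun : (fun i => bind₁ (![X 0, Z'p] : Fin 2 → MvP) (S i)) = vA := by
      funext i
      fin_cases i
      · simp [hS, vA]
      · show bind₁ (![X 0, Z'p] : Fin 2 → MvP) (quad1 p1 p2 p3) = vA 1
        rw [vA_one]
        have step1 : bind₁ (![X 0, Z'p] : Fin 2 → MvP) (quad1 p1 p2 p3)
            = C p1 * X 0 ^ 2 + C p2 * Z'p + C p3 := by
          simp [quad1, map_add, map_mul, bind₁_C_right, bind₁_X_right]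
        have step2 : C p1 * X 0 ^ 2 + C p2 * Z'p + C p3
            = C (p1 + p2 * (c - a)) * X 0 ^ 2 + C (p2 * (b - a)) * X 1 ^ 2
              + C (p2 * a + p3) := by
          rw [hZ'p]
          simp only [quad, C_add, C_mul, C_neg]
          ring
        have c1 : p1 + p2 * (c - a) = 0 := by rw [hp1, hp2]; ring
        have c2 : p2 * (b - a) = 1 := by rw [hp2]; exact inv_mul_cancel₀ hba
        have c3 : p2 * a + p3 = 0 := by rw [hp2, hp3]; ring
        rw [step1, step2, c1, c2, c3]
        simp
    rw [hfun]
  refine ⟨Q, ?_, ?_, ?_⟩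
  · apply le_antisymm
    · calc Q.totalDegree ≤ wd H := by
            rw [hQ]
            refine totalDegree_bind_le _ ?_ ?_ H
            · simp [totalDegree_X]
            · simpa using deg_quad p1 p2 p3
        _ = (bind₁ vA H).totalDegree := (totalDegree_bindA H).symm
        _ = G.totalDegree := by rw [hA]
    · calc G.totalDegree
          = (bind₁ (![X 0, Z'p] : Fin 2 → MvP) (bind₁ S H)).totalDegree := by
            rw [← hGeq]
        _ ≤ wd (bind₁ S H) := by
            refine totalDegree_bind_le _ ?_ ?_ _
            · simp [totalDegree_X]
            · simpa using deg_quad (c - a) (b - a) a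
        _ = (bind₁ vA (bind₁ S H)).totalDegree := (totalDegree_bindA _).symm
        _ = Q.totalDegree := by rw [← hQeq]
  · intro u v
    rw [hQ, eval_bind₁']
    have hx : (fun i => eval ![u, v] ((![X 0, Zp] : Fin 2 → MvP) i))
        = ![u, (-a + (a - c) * u ^ 2 + v ^ 2) / (b - a)] := by
      funext i
      fin_cases i
      · simp
      · show eval ![u, v] Zp = (-a + (a - c) * u ^ 2 + v ^ 2) / (b - a)
        rw [hZp, eval_quad]
        simp only [Matrix.cons_val_zero, Matrix.cons_val_one, Matrix.head_cons]
        rw [hp1, hp2, hp3]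
        field_simp
        ring
    rw [hx]
  · intro u t
    rw [← hA, eval_bind₁']
    have hx : (fun i => eval ![u, t] (vA i)) = ![u, t ^ 2] := by
      funext i
      fin_cases i <;> simp [vA]
    rw [hx]

end AuxPoly

section AuxAnal



lemma det_prod_clm (α β : ℝ) :
    ((ContinuousLinearMap.fst ℝ ℝ ℝ).prod
      (α • ContinuousLinearMap.fst ℝ ℝ ℝ + β • ContinuousLinearMap.snd ℝ ℝ ℝ)).det = β := by
  have : ((ContinuousLinearMap.fst ℝ ℝ ℝ).prod
      (α • ContinuousLinearMap.fst ℝ ℝ ℝ + β • ContinuousLinearMap.snd ℝ ℝ ℝ)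
      : (ℝ × ℝ) →L[ℝ] (ℝ × ℝ)).det
      = LinearMap.det (((ContinuousLinearMap.fst ℝ ℝ ℝ).prod
        (α • ContinuousLinearMap.fst ℝ ℝ ℝ + β • ContinuousLinearMap.snd ℝ ℝ ℝ)
        : (ℝ × ℝ) →L[ℝ] (ℝ × ℝ)) : (ℝ × ℝ) →ₗ[ℝ] (ℝ × ℝ)) := rfl
  rw [this, ← LinearMap.det_toMatrix (Module.Basis.finTwoProd ℝ), Matrix.det_fin_two]
  simp [LinearMap.toMatrix_apply, Module.Basis.finTwoProd_zero, Module.Basis.finTwoProd_one]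

def zf (a b c : ℝ) (p : ℝ × ℝ) : ℝ := (-a + (a - c) * p.1 ^ 2 + p.2 ^ 2) / (b - a)

lemma hasFDeriv_sqrt_zf (a b c : ℝ) (p : ℝ × ℝ) (hz : zf a b c p ≠ 0) :
    HasFDerivAt (fun q => Real.sqrt (zf a b c q))
      (((a - c) * p.1 / ((b - a) * Real.sqrt (zf a b c p))) • ContinuousLinearMap.fst ℝ ℝ ℝ
        + (p.2 / ((b - a) * Real.sqrt (zf a b c p))) • ContinuousLinearMap.snd ℝ ℝ ℝ) p := by
  have hzd : HasFDerivAt (zf a b c)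
      (((2 * (a - c) * p.1) / (b - a)) • ContinuousLinearMap.fst ℝ ℝ ℝ
        + ((2 * p.2) / (b - a)) • ContinuousLinearMap.snd ℝ ℝ ℝ) p := by
    have key0 : HasFDerivAt (fun q : ℝ × ℝ => (a - c) * (q.1 * q.1) + q.2 * q.2 + -a)
        ((a - c) • (p.1 • ContinuousLinearMap.fst ℝ ℝ ℝ + p.1 • ContinuousLinearMap.fst ℝ ℝ ℝ) +
          (p.2 • ContinuousLinearMap.snd ℝ ℝ ℝ + p.2 • ContinuousLinearMap.snd ℝ ℝ ℝ)) p :=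
      (((hasFDerivAt_fst.mul hasFDerivAt_fst).const_mul (a - c)).add
        (hasFDerivAt_snd.mul hasFDerivAt_snd)).add_const (-a)
    have key := key0.const_mul ((b - a)⁻¹)
    have hfun : zf a b c = fun q : ℝ × ℝ =>
        (b - a)⁻¹ * ((a - c) * (q.1 * q.1) + q.2 * q.2 + -a) := by
      funext q
      rw [zf, div_eq_inv_mul]
      ring_nf
    rw [hfun]
    refine key.congr_fderiv ?_
    apply ContinuousLinearMap.ext
    intro q
    simp [ContinuousLinearMap.smul_apply]
    ring
  have hsq := (Real.hasDerivAt_sqrt hz).comp_hasFDerivAt p hzd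
  set s := Real.sqrt (zf a b c p) with hsdef
  have hscal : ∀ k : ℝ, (1 / (2 * s)) * (2 * k / (b - a)) = k / ((b - a) * s) := by
    intro k
    rw [div_mul_div_comm, one_mul, show (2 * s) * (b - a) = 2 * ((b - a) * s) by ring,
      show (2 : ℝ) * k / (2 * ((b - a) * s)) = k / ((b - a) * s) from
        mul_div_mul_left k ((b - a) * s) two_ne_zero]
  have hsmul : ((1 / (2 * s)) •
      ((2 * (a - c) * p.1 / (b - a)) • ContinuousLinearMap.fst ℝ ℝ ℝ +
        (2 * p.2 / (b - a)) • ContinuousLinearMap.snd ℝ ℝ ℝ))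
      = ((a - c) * p.1 / ((b - a) * s)) • ContinuousLinearMap.fst ℝ ℝ ℝ
        + (p.2 / ((b - a) * s)) • ContinuousLinearMap.snd ℝ ℝ ℝ := by
    rw [smul_add, smul_smul, smul_smul]
    congr 1
    · rw [show (2 : ℝ) * (a - c) * p.1 = 2 * ((a - c) * p.1) by ring, hscal]
    · rw [show (2 : ℝ) * p.2 = 2 * p.2 by ring, hscal]
  rw [← hsmul]
  exact hsq

lemma graph_null (f : ℝ → ℝ) (hf : Measurable f) :
    volume {p : ℝ × ℝ | p.2 = f p.1} = 0 := by
  have hs : MeasurableSet {p : ℝ × ℝ | p.2 = f p.1} :=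
    measurableSet_eq_fun measurable_snd (hf.comp measurable_fst)
  rw [Measure.volume_eq_prod, Measure.measure_prod_null hs]
  refine Filter.Eventually.of_forall fun x => ?_
  have hpre : (Prod.mk x ⁻¹' {p : ℝ × ℝ | p.2 = f p.1}) = {f x} := by
    ext y; simp [Set.mem_preimage]
  show volume (Prod.mk x ⁻¹' {p : ℝ × ℝ | p.2 = f p.1}) = 0
  rw [hpre]
  exact measure_singleton _

lemma half_disk_zero (h : ℝ × ℝ → ℝ) (heven : ∀ q : ℝ × ℝ, h (q.1, -q.2) = h q)
    (h0 : ∫ q in Disk, h q = 0) : ∫ q in Disk ∩ {q : ℝ × ℝ | 0 ≤ q.2}, h q = 0 := by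
  have hDiskMeas : MeasurableSet Disk := by
    apply measurableSet_le (by fun_prop) measurable_const
  set Dp := Disk ∩ {q : ℝ × ℝ | 0 ≤ q.2} with hDp
  set Dm := Disk ∩ {q : ℝ × ℝ | q.2 ≤ 0} with hDm
  set Dm' := Disk ∩ {q : ℝ × ℝ | q.2 < 0} with hDm'
  set e : ℝ × ℝ ≃ᵐ ℝ × ℝ := (MeasurableEquiv.refl ℝ).prodCongr (MeasurableEquiv.neg ℝ) with he
  have hecoe : ∀ q : ℝ × ℝ, e q = (q.1, -q.2) := fun q => rfl
  have hmp : MeasurePreserving e volume volume := by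
    have h1 : MeasurePreserving (Prod.map (id : ℝ → ℝ) (Neg.neg : ℝ → ℝ))
        ((volume : Measure ℝ).prod volume) ((volume : Measure ℝ).prod volume) :=
      (MeasurePreserving.id volume).prod (Measure.measurePreserving_neg volume)
    have h2 : (Prod.map (id : ℝ → ℝ) (Neg.neg : ℝ → ℝ)) = ⇑e := rfl
    rw [h2] at h1
    rw [Measure.volume_eq_prod]
    exact h1
  have hpre : e ⁻¹' Dp = Dm := by
    ext q
    simp only [hDp, hDm, Set.mem_preimage, Set.mem_inter_iff, hecoe, Set.mem_setOf_eq, Disk]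
    constructor
    · rintro ⟨h1, h2⟩; exact ⟨by simpa using h1, by linarith⟩
    · rintro ⟨h1, h2⟩; exact ⟨by simpa using h1, by simpa using h2⟩
  have hkey : ∫ q in Dm, h q = ∫ q in Dp, h q := by
    rw [← hpre, ← hmp.setIntegral_preimage_emb e.measurableEmbedding h Dp]
    refine setIntegral_congr_fun (e.measurable
      (hDiskMeas.inter (measurableSet_le measurable_const measurable_snd)))
      fun q _ => (heven q).symm
  have hzero_null : volume {q : ℝ × ℝ | q.2 = 0} = 0 := by
    simpa using graph_null (fun _ => (0 : ℝ)) measurable_const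
  have hmm' : ∫ q in Dm', h q = ∫ q in Dm, h q := by
    apply setIntegral_congr_set
    rw [MeasureTheory.ae_eq_set]
    constructor
    · have hsub : Dm' ⊆ Dm :=
        Set.inter_subset_inter_right _ (fun q (hq : q.2 < 0) => le_of_lt hq)
      have hempty : Dm' \ Dm = ∅ := Set.diff_eq_empty.mpr hsub
      rw [hempty]
      exact measure_empty
    · refine measure_mono_null (fun q hq => ?_) hzero_null
      obtain ⟨⟨hdisk, hle⟩, hnot⟩ := hq
      have hn : ¬ q.2 < 0 := fun hlt => hnot ⟨hdisk, hlt⟩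
      exact le_antisymm hle (not_lt.mp hn)
  by_cases hint : IntegrableOn h Dp volume
  · have hIm : IntegrableOn h Dm volume := by
      have h1 : IntegrableOn (fun q => h (e q)) (e ⁻¹' Dp) volume :=
        (hmp.integrableOn_comp_preimage e.measurableEmbedding).mpr hint
      have h2 : (fun q => h (e q)) = h := funext fun q => heven q
      rwa [h2, hpre] at h1
    have hIm' : IntegrableOn h Dm' volume :=
      hIm.mono_set (Set.inter_subset_inter_right _ (fun q (hq : q.2 < 0) => le_of_lt hq))
    have hunion : Disk = Dp ∪ Dm' := by
      ext q
      constructor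
      · intro hq
        rcases le_or_gt 0 q.2 with hcase|hcase
        · exact Or.inl ⟨hq, hcase⟩
        · exact Or.inr ⟨hq, hcase⟩
      · rintro (⟨hq, _⟩ | ⟨hq, _⟩) <;> exact hq
    have hdisj : Disjoint Dp Dm' := by
      rw [Set.disjoint_left]
      rintro q ⟨_, h1⟩ ⟨_, h2⟩
      have h1' : (0:ℝ) ≤ q.2 := h1
      have h2' : q.2 < 0 := h2
      exact (not_le.mpr h2') h1'
    have hDm'meas : MeasurableSet Dm' :=
      hDiskMeas.inter (measurableSet_lt measurable_snd measurable_const)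
    rw [hunion, setIntegral_union hdisj hDm'meas hint hIm'] at h0
    rw [hmm', hkey] at h0
    linarith
  · exact integral_undef hint

lemma integral_transfer (a b c κ1 κ2 κ3 : ℝ) (ha : 0 ≤ a) (hab : a < b) (hc : 0 ≤ c)
    (F : ℝ × ℝ → ℝ) (hFeven : ∀ q : ℝ × ℝ, F (q.1, -q.2) = F q)
    (horth : ∫ p in Disk, F p * WBdisk κ1 κ2 κ3 p = 0) :
    ∫ p in LamSet a b c, F (psiMap a b c p) * Wabc a b c κ1 κ2 κ3 p = 0 := by
  have hba : (0:ℝ) < b - a := sub_pos.mpr hab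
  have hba' : b - a ≠ 0 := ne_of_gt hba
  have hzc : Continuous (zf a b c) := by unfold zf; fun_prop
  have h1u : Continuous (fun p : ℝ × ℝ => 1 - p.1 ^ 2) := by fun_prop
  set Λ' : Set (ℝ × ℝ) :=
    {p | 0 < p.2 ∧ 0 < zf a b c p ∧ zf a b c p < 1 - p.1 ^ 2} with hΛ'
  have hopen : IsOpen Λ' :=
    (isOpen_lt continuous_const continuous_snd).and
      ((isOpen_lt continuous_const hzc).and (isOpen_lt hzc h1u))
  have hmeas : MeasurableSet Λ' := hopen.measurableSet
  have hpsi : ∀ p : ℝ × ℝ, psiMap a b c p = (p.1, Real.sqrt (zf a b c p)) := fun p => rfl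
  set E : ℝ × ℝ → (ℝ × ℝ →L[ℝ] ℝ × ℝ) := fun p =>
    (ContinuousLinearMap.fst ℝ ℝ ℝ).prod
      (((a - c) * p.1 / ((b - a) * Real.sqrt (zf a b c p))) • ContinuousLinearMap.fst ℝ ℝ ℝ
        + (p.2 / ((b - a) * Real.sqrt (zf a b c p))) • ContinuousLinearMap.snd ℝ ℝ ℝ) with hE
  have hderiv : ∀ p ∈ Λ', HasFDerivWithinAt (psiMap a b c) (E p) Λ' p := by
    intro p hp
    exact (HasFDerivAt.prodMk hasFDerivAt_fst (hasFDeriv_sqrt_zf a b c p (ne_of_gt hp.2.1))).hasFDerivWithinAt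
  have hinj : Set.InjOn (psiMap a b c) Λ' := by
    intro p hp q hq hpq
    have h1 : p.1 = q.1 := by
      have := congrArg Prod.fst hpq
      simpa [hpsi] using this
    have h2 : Real.sqrt (zf a b c p) = Real.sqrt (zf a b c q) := by
      have := congrArg Prod.snd hpq
      simpa [hpsi] using this
    have h3 : zf a b c p = zf a b c q := by
      have h4 := congrArg (fun x : ℝ => x ^ 2) h2
      simpa [Real.sq_sqrt (le_of_lt hp.2.1), Real.sq_sqrt (le_of_lt hq.2.1)] using h4
    have h5 := congrArg (fun x : ℝ => x * (b - a)) h3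
    simp only [zf, div_mul_cancel₀ _ hba'] at h5
    have h6 : p.2 ^ 2 = q.2 ^ 2 := by rw [h1] at h5; linarith
    have h7 : p.2 = q.2 := by
      have h8 : Real.sqrt (p.2 ^ 2) = Real.sqrt (q.2 ^ 2) := by rw [h6]
      rwa [Real.sqrt_sq hp.1.le, Real.sqrt_sq hq.1.le] at h8
    exact Prod.ext h1 h7
  set D' : Set (ℝ × ℝ) := {q | 0 < q.2 ∧ q.1 ^ 2 + q.2 ^ 2 < 1} with hD'
  have himg : psiMap a b c '' Λ' = D' := by
    ext q
    constructor
    · rintro ⟨p, hp, rfl⟩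
      obtain ⟨hv, hz0, hz1⟩ := hp
      refine ⟨Real.sqrt_pos.mpr hz0, ?_⟩
      show p.1 ^ 2 + Real.sqrt (zf a b c p) ^ 2 < 1
      rw [Real.sq_sqrt hz0.le]
      linarith
    · rintro ⟨ht, hlt⟩
      have hq1 : q.1 ^ 2 ≤ 1 := by nlinarith [sq_nonneg q.2]
      set w := a + (c - a) * q.1 ^ 2 + (b - a) * q.2 ^ 2 with hw
      have hwpos : 0 < w := by
        have e1 : 0 < (b - a) * q.2 ^ 2 := mul_pos hba (pow_pos ht 2)
        nlinarith [mul_nonneg hc (sq_nonneg q.1), mul_nonneg ha (sub_nonneg.mpr hq1)]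
      have hzw : zf a b c (q.1, Real.sqrt w) = q.2 ^ 2 := by
        rw [zf]
        show (-a + (a - c) * q.1 ^ 2 + Real.sqrt w ^ 2) / (b - a) = q.2 ^ 2
        rw [Real.sq_sqrt hwpos.le, hw]
        field_simp
        ring
      refine ⟨(q.1, Real.sqrt w), ⟨Real.sqrt_pos.mpr hwpos, ?_, ?_⟩, ?_⟩
      · rw [hzw]; exact pow_pos ht 2
      · rw [hzw]
        show q.2 ^ 2 < 1 - q.1 ^ 2
        linarith
      · rw [hpsi]
        show ((q.1, Real.sqrt w).1, Real.sqrt (zf a b c (q.1, Real.sqrt w))) = q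
        rw [hzw, Real.sqrt_sq ht.le]
  set g : ℝ × ℝ → ℝ := fun q => (b - a) * (F q * WBdisk κ1 κ2 κ3 q) with hg
  have hCoV := integral_image_eq_integral_abs_det_fderiv_smul volume hmeas hderiv hinj g
  have hpt : ∀ p ∈ Λ', |(E p).det| • g (psiMap a b c p)
      = F (psiMap a b c p) * Wabc a b c κ1 κ2 κ3 p := by
    intro p hp
    obtain ⟨hv, hz0, hz1⟩ := hp
    set s := Real.sqrt (zf a b c p) with hs
    have hspos : 0 < s := Real.sqrt_pos.mpr hz0
    have hs2 : s ^ 2 = zf a b c p := Real.sq_sqrt hz0.le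
    have hdet : (E p).det = p.2 / ((b - a) * s) := det_prod_clm _ _
    have hdetpos : 0 < p.2 / ((b - a) * s) := div_pos hv (mul_pos hba hspos)
    have hWB : WBdisk κ1 κ2 κ3 (psiMap a b c p)
        = |p.1| ^ (2 * κ1) * s ^ (2 * κ2) * (1 - p.1 ^ 2 - s ^ 2) ^ κ3 := by
      rw [hpsi, WBdisk]
      simp only
      rw [abs_of_pos hspos]
    have hquot : (b - (b - c) * p.1 ^ 2 - p.2 ^ 2) / (b - a) = 1 - p.1 ^ 2 - s ^ 2 := by
      rw [hs2, zf]
      field_simp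
      ring
    have hzrw : ((-a + (a - c) * p.1 ^ 2 + p.2 ^ 2) / (b - a)) = s ^ 2 := by
      rw [hs2, zf]
    have hpow : (s ^ 2 : ℝ) ^ (κ2 - 1 / 2) = s ^ (2 * κ2) / s := by
      rw [← Real.rpow_natCast s 2, ← Real.rpow_mul hspos.le]
      rw [show ((2:ℕ) : ℝ) * (κ2 - 1 / 2) = 2 * κ2 - 1 by push_cast; ring]
      rw [Real.rpow_sub hspos, Real.rpow_one]
    rw [Wabc, hquot, hzrw, hpow, hdet, abs_of_pos hdetpos, smul_eq_mul, hg]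
    simp only
    rw [hWB, abs_of_pos hv]
    field_simp
  have hsubΛ : Λ' ⊆ LamSet a b c := by
    rintro p ⟨hv, hz0, hz1⟩
    have hnum : 0 < -a + (a - c) * p.1 ^ 2 + p.2 ^ 2 := by
      have := (div_pos_iff.mp hz0)
      rcases this with ⟨h1', _⟩ | ⟨_, h2'⟩
      · exact h1'
      · linarith
    have hnum2 : -a + (a - c) * p.1 ^ 2 + p.2 ^ 2 < (1 - p.1 ^ 2) * (b - a) := by
      have := (div_lt_iff₀ hba).mp hz1
      linarith
    have hu2 : p.1 ^ 2 ≤ 1 := by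
      by_contra hcon
      push_neg at hcon
      have e1 : 0 < zf a b c p := hz0
      have e2 : zf a b c p < 1 - p.1 ^ 2 := hz1
      linarith
    refine ⟨by linarith, by nlinarith, ?_, hv.le⟩
    rw [← Real.sqrt_one, ← Real.sqrt_sq_eq_abs]
    exact Real.sqrt_le_sqrt hu2
  have hnull : volume (LamSet a b c \ Λ') = 0 := by
    have hm1 : Measurable fun u : ℝ => Real.sqrt (a + (c - a) * u ^ 2) := by
      apply Real.continuous_sqrt.measurable.comp
      fun_prop
    have hm2 : Measurable fun u : ℝ => Real.sqrt (b + (c - b) * u ^ 2) := by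
      apply Real.continuous_sqrt.measurable.comp
      fun_prop
    have hsub : LamSet a b c \ Λ' ⊆ {p : ℝ × ℝ | p.2 = 0}
        ∪ ({p : ℝ × ℝ | p.2 = Real.sqrt (a + (c - a) * p.1 ^ 2)}
          ∪ {p : ℝ × ℝ | p.2 = Real.sqrt (b + (c - b) * p.1 ^ 2)}) := by
      rintro p ⟨⟨hl1, hl2, hl3, hl4⟩, hnot⟩
      simp only [hΛ', Set.mem_setOf_eq, not_and, not_lt] at hnot
      rcases eq_or_lt_of_le hl4 with hv0 | hvpos
      · exact Or.inl hv0.symm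
      · have hz0 : 0 ≤ zf a b c p := div_nonneg (by nlinarith) hba.le
        rcases eq_or_lt_of_le hz0 with hzz | hzpos
        · have hnum : -a + (a - c) * p.1 ^ 2 + p.2 ^ 2 = 0 := by
            have := congrArg (fun x : ℝ => x * (b - a)) hzz.symm
            simpa [zf, div_mul_cancel₀ _ hba'] using this
          have he : p.2 ^ 2 = a + (c - a) * p.1 ^ 2 := by linarith
          refine Or.inr (Or.inl ?_)
          show p.2 = Real.sqrt (a + (c - a) * p.1 ^ 2)
          rw [← he, Real.sqrt_sq hvpos.le]
        · have hle : zf a b c p ≤ 1 - p.1 ^ 2 := by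
            rw [zf, div_le_iff₀ hba]
            nlinarith
          have heq : zf a b c p = 1 - p.1 ^ 2 := le_antisymm hle (hnot hvpos hzpos)
          have hnum : -a + (a - c) * p.1 ^ 2 + p.2 ^ 2 = (1 - p.1 ^ 2) * (b - a) := by
            have := congrArg (fun x : ℝ => x * (b - a)) heq
            simpa [zf, div_mul_cancel₀ _ hba'] using this
          have he : p.2 ^ 2 = b + (c - b) * p.1 ^ 2 := by nlinarith
          refine Or.inr (Or.inr ?_)
          show p.2 = Real.sqrt (b + (c - b) * p.1 ^ 2)
          rw [← he, Real.sqrt_sq hvpos.le]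
    refine measure_mono_null hsub ?_
    refine measure_union_null ?_ (measure_union_null ?_ ?_)
    · simpa using graph_null (fun _ => (0:ℝ)) measurable_const
    · exact graph_null _ hm1
    · exact graph_null _ hm2
  have haeLam : LamSet a b c =ᵐ[volume] Λ' := by
    rw [MeasureTheory.ae_eq_set]
    refine ⟨hnull, ?_⟩
    rw [Set.diff_eq_empty.mpr hsubΛ]
    exact measure_empty
  have haeD : D' =ᵐ[volume] (Disk ∩ {q : ℝ × ℝ | 0 ≤ q.2} : Set (ℝ × ℝ)) := by
    rw [MeasureTheory.ae_eq_set]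
    constructor
    · rw [Set.diff_eq_empty.mpr ?_]
      · exact measure_empty
      · rintro q ⟨ht, hlt⟩
        exact ⟨by show q.1 ^ 2 + q.2 ^ 2 ≤ 1; linarith, ht.le⟩
    · have hsub : (Disk ∩ {q : ℝ × ℝ | 0 ≤ q.2}) \ D' ⊆ {q : ℝ × ℝ | q.2 = 0}
          ∪ {q : ℝ × ℝ | q.2 = Real.sqrt (1 - q.1 ^ 2)} := by
        rintro q ⟨⟨hdisk, hpos⟩, hnot⟩
        simp only [hD', Set.mem_setOf_eq, not_and, not_lt] at hnot
        have hpos' : (0:ℝ) ≤ q.2 := hpos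
        rcases eq_or_lt_of_le hpos' with hv0 | hvpos
        · exact Or.inl hv0.symm
        · have h1 : (1:ℝ) ≤ q.1 ^ 2 + q.2 ^ 2 := hnot hvpos
          have h2 : q.1 ^ 2 + q.2 ^ 2 ≤ 1 := hdisk
          have he : q.2 ^ 2 = 1 - q.1 ^ 2 := by linarith
          refine Or.inr ?_
          show q.2 = Real.sqrt (1 - q.1 ^ 2)
          rw [← he, Real.sqrt_sq hvpos.le]
      refine measure_mono_null hsub (measure_union_null ?_ ?_)
      · simpa using graph_null (fun _ => (0:ℝ)) measurable_const
      · refine graph_null (fun u : ℝ => Real.sqrt (1 - u ^ 2)) ?_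
        apply Real.continuous_sqrt.measurable.comp
        fun_prop
  have heven : ∀ q : ℝ × ℝ, F (q.1, -q.2) * WBdisk κ1 κ2 κ3 (q.1, -q.2)
      = F q * WBdisk κ1 κ2 κ3 q := by
    intro q
    rw [hFeven]
    congr 1
    simp [WBdisk, abs_neg, neg_sq]
  calc ∫ p in LamSet a b c, F (psiMap a b c p) * Wabc a b c κ1 κ2 κ3 p
      = ∫ p in Λ', F (psiMap a b c p) * Wabc a b c κ1 κ2 κ3 p :=
        setIntegral_congr_set haeLam
    _ = ∫ p in Λ', |(E p).det| • g (psiMap a b c p) :=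
        (setIntegral_congr_fun hmeas fun p hp => (hpt p hp).symm)
    _ = ∫ q in psiMap a b c '' Λ', g q := hCoV.symm
    _ = ∫ q in D', g q := by rw [himg]
    _ = (b - a) * ∫ q in D', F q * WBdisk κ1 κ2 κ3 q := integral_const_mul _ _
    _ = (b - a) * ∫ q in Disk ∩ {q : ℝ × ℝ | 0 ≤ q.2}, F q * WBdisk κ1 κ2 κ3 q := by
        rw [setIntegral_congr_set haeD]
    _ = (b - a) * 0 := by
        rw [half_disk_zero (fun q => F q * WBdisk κ1 κ2 κ3 q) (fun q => heven q) horth]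
    _ = 0 := mul_zero _

end AuxAnal

/-- orthogonality on the disk of polynomials even in the second variable
transfers through `ψ` to orthogonality on `Λ_{a,b,c}`, the compositions with `ψ` being
again polynomials even in the second variable and of the same degrees. -/
theorem orthogonality_transfers_through_psi
    (a b c κ1 κ2 κ3 : ℝ) (ha : 0 ≤ a) (hab : a < b) (hc : 0 ≤ c)
    (hκ1 : -(1 : ℝ) / 2 < κ1) (hκ2 : -(1 : ℝ) / 2 < κ2) (hκ3 : -1 < κ3)
    (G G' : MvPolynomial (Fin 2) ℝ) (hG : EvenSnd G) (hG' : EvenSnd G')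
    (horth : ∫ p in Disk, ev2 G p * ev2 G' p * WBdisk κ1 κ2 κ3 p = 0) :
    -- explicit description: if `G(s,t) = H(s,t²)` then `(G∘ψ)(u,v) = H(u, z(u,v))`
    (∀ H : MvPolynomial (Fin 2) ℝ,
      (∀ s t : ℝ, ev2 G (s, t) = ev2 H (s, t ^ 2)) →
      ∀ p ∈ LamSet a b c,
        ev2 G (psiMap a b c p)
          = ev2 H (p.1, (-a + (a - c) * p.1 ^ 2 + p.2 ^ 2) / (b - a))) ∧
    -- `G∘ψ` coincides on `Λ_{a,b,c}` with a polynomial even in `v` of the same degree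
    (∃ Gψ : MvPolynomial (Fin 2) ℝ, EvenSnd Gψ ∧
      Gψ.totalDegree = G.totalDegree ∧
      ∀ p ∈ LamSet a b c, ev2 G (psiMap a b c p) = ev2 Gψ p) ∧
    (∃ Gψ' : MvPolynomial (Fin 2) ℝ, EvenSnd Gψ' ∧
      Gψ'.totalDegree = G'.totalDegree ∧
      ∀ p ∈ LamSet a b c, ev2 G' (psiMap a b c p) = ev2 Gψ' p) ∧
    -- the transferred orthogonality
    ∫ p in LamSet a b c,
        ev2 G (psiMap a b c p) * ev2 G' (psiMap a b c p) * Wabc a b c κ1 κ2 κ3 p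
      = 0 := by
  have hba : (0:ℝ) < b - a := sub_pos.mpr hab
  have hzpos : ∀ p ∈ LamSet a b c, 0 ≤ (-a + (a - c) * p.1 ^ 2 + p.2 ^ 2) / (b - a) := by
    intro p hp
    exact div_nonneg (by nlinarith [hp.1]) hba.le
  have hfr : ∀ p ∈ LamSet a b c,
      frakt a b c p ^ 2 = (-a + (a - c) * p.1 ^ 2 + p.2 ^ 2) / (b - a) := by
    intro p hp
    exact Real.sq_sqrt (hzpos p hp)
  have transfer : ∀ P : MvPolynomial (Fin 2) ℝ, EvenSnd P →
      ∃ Pψ : MvPolynomial (Fin 2) ℝ, EvenSnd Pψ ∧ Pψ.totalDegree = P.totalDegree ∧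
        ∀ p ∈ LamSet a b c, ev2 P (psiMap a b c p) = ev2 Pψ p := by
    intro P hP
    have hPev : ∀ u v : ℝ, MvPolynomial.eval ![u, -v] P = MvPolynomial.eval ![u, v] P :=
      fun u v => hP u v
    obtain ⟨Q, hdeg, hevalQ, hevalP⟩ := exists_transfer a b c hab P hPev
    refine ⟨Q, ?_, hdeg, ?_⟩
    · intro u v
      show MvPolynomial.eval ![u, -v] Q = MvPolynomial.eval ![u, v] Q
      rw [hevalQ u (-v), hevalQ u v, show ((-v : ℝ)) ^ 2 = v ^ 2 from neg_sq v]
    · intro p hp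
      have e1 : ev2 P (psiMap a b c p)
          = MvPolynomial.eval ![p.1, frakt a b c p ^ 2] (hhalf P) :=
        hevalP p.1 (frakt a b c p)
      have e2 : ev2 Q p
          = MvPolynomial.eval ![p.1, (-a + (a - c) * p.1 ^ 2 + p.2 ^ 2) / (b - a)] (hhalf P) :=
        hevalQ p.1 p.2
      rw [e1, e2, hfr p hp]
  refine ⟨?_, transfer G hG, transfer G' hG', ?_⟩
  · intro H hH p hp
    have e1 : ev2 G (psiMap a b c p) = ev2 H (p.1, frakt a b c p ^ 2) :=
      hH p.1 (frakt a b c p)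
    rw [e1, hfr p hp]
  · have key := integral_transfer a b c κ1 κ2 κ3 ha hab hc
      (fun q => ev2 G q * ev2 G' q)
      (fun q => by
        show ev2 G (q.1, -q.2) * ev2 G' (q.1, -q.2) = ev2 G q * ev2 G' q
        rw [hG q.1 q.2, hG' q.1 q.2])
      horth
    exact key
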